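/- Let K be an irreducible, row-stochastic, row-reversible kernel with stationary distribution π (π_i K_{ij} = π_j K_{ji}), and let Q(t) solve Q' = (K - I)Q. For a differentiable convex φ : ℝ⁺ → ℝ, define G_φ(Q|π) = Σ_i φ(Q_i) π_i. Then d/dt G_φ(Q(t)|π) = -(1/2) Σ_{i,j} K_{ij} β(Q_i, Q_j)(φ'(Q_j) - φ'(Q_i))(log Q_j - log Q_i) π_i ≤ 0, where β(x,y) = (x-y)/(log x - log y) is the logarithmic mean (with β(x,x)=x). -/

import Mathlib

open Matrix
/-- The logarithmic mean `β(x,y) = (x-y)/(log x - log y)`, with `β(x,x) = x`. -/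
noncomputable def logMean (x y : ℝ) : ℝ :=
  if x = y then x else (x - y) / (Real.log x - Real.log y)

lemma logMean_key {x y : ℝ} (hx : 0 < x) (hy : 0 < y) :
    logMean x y * (Real.log y - Real.log x) = y - x := by
  unfold logMean
  by_cases h : x = y
  · simp [h]
  · rw [if_neg h]
    have hlog : Real.log x ≠ Real.log y := fun he =>
      h (Real.log_injOn_pos.eq_iff (Set.mem_Ioi.2 hx) (Set.mem_Ioi.2 hy) |>.mp he)
    rw [div_mul_eq_mul_div, div_eq_iff (sub_ne_zero.2 hlog)]
    ring

lemma phi'_mono {φ φ' : ℝ → ℝ} (hφconv : ConvexOn ℝ (Set.Ici 0) φ)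
    (hφ' : ∀ x : ℝ, 0 < x → HasDerivAt φ (φ' x) x)
    {x y : ℝ} (hx : 0 < x) (hy : 0 < y) (hxy : x ≤ y) : φ' x ≤ φ' y := by
  rcases eq_or_lt_of_le hxy with rfl | h
  · exact le_rfl
  · calc φ' x ≤ slope φ x y := hφconv.le_slope_of_hasDerivAt hx.le hy.le h (hφ' x hx)
      _ ≤ φ' y := hφconv.slope_le_of_hasDerivAt hx.le hy.le h (hφ' y hy)


theorem stmt7 {n : ℕ}
    (K : Matrix (Fin n) (Fin n) ℝ) (π : Fin n → ℝ)
    (hπ : ∀ i, 0 < π i) (hπ1 : ∑ i, π i = 1)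
    (hKnonneg : ∀ i j, 0 ≤ K i j)
    (hKirr : ∀ i j, ∃ m : ℕ, 0 < (K ^ m) i j)
    (hKrow : ∀ i, ∑ j, K i j = 1)
    (hrev : ∀ i j, π i * K i j = π j * K j i)
    -- `Q(t)` is an everywhere-positive density solving `Q' = (K - I) Q`
    (Q : ℝ → Fin n → ℝ)
    (hQpos : ∀ t i, 0 < Q t i)
    (hQmass : ∀ t, ∑ i, Q t i * π i = 1)
    (hQ : ∀ t : ℝ, HasDerivAt Q (K *ᵥ Q t - Q t) t)
    -- `φ` is convex on `ℝ⁺` and differentiable with derivative `φ'`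
    (φ φ' : ℝ → ℝ)
    (hφconv : ConvexOn ℝ (Set.Ici 0) φ)
    (hφ' : ∀ x : ℝ, 0 < x → HasDerivAt φ (φ' x) x) :
    ∀ t : ℝ,
      HasDerivAt (fun s => ∑ i, φ (Q s i) * π i)
        (-(1 / 2) * ∑ i, ∑ j, K i j * logMean (Q t i) (Q t j) *
          (φ' (Q t j) - φ' (Q t i)) * (Real.log (Q t j) - Real.log (Q t i)) * π i) t ∧
      (-(1 / 2) * ∑ i, ∑ j, K i j * logMean (Q t i) (Q t j) *
          (φ' (Q t j) - φ' (Q t i)) * (Real.log (Q t j) - Real.log (Q t i)) * π i) ≤ 0 := by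
  
  intro t
  -- each term rewritten via logMean_key
  have hterm : ∀ i j, K i j * logMean (Q t i) (Q t j) *
      (φ' (Q t j) - φ' (Q t i)) * (Real.log (Q t j) - Real.log (Q t i)) * π i
      = K i j * (Q t j - Q t i) * (φ' (Q t j) - φ' (Q t i)) * π i := by
    intro i j
    have := logMean_key (hQpos t i) (hQpos t j)
    calc K i j * logMean (Q t i) (Q t j) * (φ' (Q t j) - φ' (Q t i)) *
          (Real.log (Q t j) - Real.log (Q t i)) * π i
        = K i j * (logMean (Q t i) (Q t j) * (Real.log (Q t j) - Real.log (Q t i))) *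
          (φ' (Q t j) - φ' (Q t i)) * π i := by ring
      _ = K i j * (Q t j - Q t i) * (φ' (Q t j) - φ' (Q t i)) * π i := by rw [this]
  set D := -(1 / 2) * ∑ i, ∑ j, K i j * logMean (Q t i) (Q t j) *
      (φ' (Q t j) - φ' (Q t i)) * (Real.log (Q t j) - Real.log (Q t i)) * π i with hD
  -- symmetrization
  have hA : (∑ i, ∑ j, K i j * (Q t j - Q t i) * φ' (Q t j) * π i)
      = -∑ i, ∑ j, K i j * (Q t j - Q t i) * φ' (Q t i) * π i := by
    rw [← Finset.sum_neg_distrib]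
    rw [Finset.sum_comm]
    refine Finset.sum_congr rfl fun j _ => ?_
    rw [← Finset.sum_neg_distrib]
    refine Finset.sum_congr rfl fun i _ => ?_
    have h1 : K i j * (Q t j - Q t i) * φ' (Q t j) * π i
        = (π i * K i j) * ((Q t j - Q t i) * φ' (Q t j)) := by ring
    rw [h1, hrev i j]; ring
  have hDeq : D = ∑ i, φ' (Q t i) * ((K *ᵥ Q t - Q t) i) * π i := by
    rw [hD]
    have : (∑ i, ∑ j, K i j * logMean (Q t i) (Q t j) *
        (φ' (Q t j) - φ' (Q t i)) * (Real.log (Q t j) - Real.log (Q t i)) * π i)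
        = (∑ i, ∑ j, K i j * (Q t j - Q t i) * φ' (Q t j) * π i)
          - (∑ i, ∑ j, K i j * (Q t j - Q t i) * φ' (Q t i) * π i) := by
      rw [← Finset.sum_sub_distrib]
      refine Finset.sum_congr rfl fun i _ => ?_
      rw [← Finset.sum_sub_distrib]
      refine Finset.sum_congr rfl fun j _ => ?_
      rw [hterm i j]; ring
    rw [this, hA]
    have h2 : -(1/2 : ℝ) * (-∑ i, ∑ j, K i j * (Q t j - Q t i) * φ' (Q t i) * π i
        - ∑ i, ∑ j, K i j * (Q t j - Q t i) * φ' (Q t i) * π i)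
        = ∑ i, ∑ j, K i j * (Q t j - Q t i) * φ' (Q t i) * π i := by ring
    rw [h2]
    refine Finset.sum_congr rfl fun i _ => ?_
    have h3 : (∑ j, K i j * (Q t j - Q t i) * φ' (Q t i) * π i)
        = (∑ j, K i j * Q t j - (∑ j, K i j) * Q t i) * (φ' (Q t i) * π i) := by
      simp only [sub_mul, Finset.sum_mul, ← Finset.sum_sub_distrib]
      exact Finset.sum_congr rfl fun j _ => by ring
    rw [h3, hKrow i]
    simp [Matrix.mulVec, dotProduct, Pi.sub_apply]
    ring
  constructor
  · -- derivative
    have hd : HasDerivAt (fun s => ∑ i, φ (Q s i) * π i)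
        (∑ i, φ' (Q t i) * ((K *ᵥ Q t - Q t) i) * π i) t := by
      apply HasDerivAt.fun_sum
      intro i _
      have hQi : HasDerivAt (fun s => Q s i) ((K *ᵥ Q t - Q t) i) t :=
        hasDerivAt_pi.mp (hQ t) i
      exact ((hφ' (Q t i) (hQpos t i)).comp t hQi).mul_const (π i)
    rwa [← hDeq] at hd
  · -- nonpositivity
    rw [hD, neg_mul, neg_nonpos]
    have : (0:ℝ) ≤ ∑ i, ∑ j, K i j * logMean (Q t i) (Q t j) *
        (φ' (Q t j) - φ' (Q t i)) * (Real.log (Q t j) - Real.log (Q t i)) * π i := by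
      refine Finset.sum_nonneg fun i _ => Finset.sum_nonneg fun j _ => ?_
      rw [hterm i j]
      have key : 0 ≤ (Q t j - Q t i) * (φ' (Q t j) - φ' (Q t i)) := by
        rcases le_total (Q t i) (Q t j) with h | h
        · exact mul_nonneg (by linarith)
            (by linarith [phi'_mono hφconv hφ' (hQpos t i) (hQpos t j) h])
        · nlinarith [phi'_mono hφconv hφ' (hQpos t j) (hQpos t i) h]
      have : K i j * (Q t j - Q t i) * (φ' (Q t j) - φ' (Q t i)) * π i
          = K i j * ((Q t j - Q t i) * (φ' (Q t j) - φ' (Q t i))) * π i := by ring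
      rw [this]
      exact mul_nonneg (mul_nonneg (hKnonneg i j) key) (hπ i).le
    positivity
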